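/- Let I ⊆ ℝ be an open interval, c ∈ ℝ, f : ℝ → ℝ twice differentiable on I with f(t) > 0 on I, λ : ℝ → ℝ differentiable on I with λ(t) ≠ 0 on I, and μ : ℝ → ℝ a function on I. Assume that for all t ∈ I: μ(t)·λ(t) = −f''(t)/f(t) and λ(t)² = (c − f'(t)²)/f(t)². Let θ : ℝ → ℝ be differentiable on I with cos(θ(t)) ≠ 0 and tan(θ(t)) = f'(t)/(f(t)·λ(t)) for all t ∈ I. Then θ'(t) = −μ(t) for all t ∈ I. -/

import Mathlib

/-- With `μ·λ = −f''/f` and `λ² = (c − f'²)/f²` on the open interval `I`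
(`f > 0`, `λ ≠ 0`, `λ` differentiable), if `tan θ = f'/(f·λ)` with `cos θ ≠ 0`,
then `θ' = −μ` on `I`. -/
theorem stmt_8 (a b c : ℝ) (f f' f'' lam μ θ θ' : ℝ → ℝ)
    (hf : ∀ t ∈ Set.Ioo a b, HasDerivAt f (f' t) t)
    (hf' : ∀ t ∈ Set.Ioo a b, HasDerivAt f' (f'' t) t)
    (hpos : ∀ t ∈ Set.Ioo a b, 0 < f t)
    (hlamdiff : ∀ t ∈ Set.Ioo a b, DifferentiableAt ℝ lam t)
    (hlam0 : ∀ t ∈ Set.Ioo a b, lam t ≠ 0)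
    (hmul : ∀ t ∈ Set.Ioo a b, μ t * lam t = -(f'' t / f t))
    (hlamsq : ∀ t ∈ Set.Ioo a b, lam t ^ 2 = (c - f' t ^ 2) / f t ^ 2)
    (hθ : ∀ t ∈ Set.Ioo a b, HasDerivAt θ (θ' t) t)
    (hcos : ∀ t ∈ Set.Ioo a b, Real.cos (θ t) ≠ 0)
    (htan : ∀ t ∈ Set.Ioo a b, Real.tan (θ t) = f' t / (f t * lam t)) :
    ∀ t ∈ Set.Ioo a b, θ' t = -μ t := by
  intro t ht
  have hmem : Set.Ioo a b ∈ nhds t := isOpen_Ioo.mem_nhds ht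
  have hF := hf t ht
  have hF' := hf' t ht
  have hF0 : f t ≠ 0 := ne_of_gt (hpos t ht)
  have hΛ0 : lam t ≠ 0 := hlam0 t ht
  have hC0 : Real.cos (θ t) ≠ 0 := hcos t ht
  set L := deriv lam t with hLdef
  have hlamD : HasDerivAt lam L t := (hlamdiff t ht).hasDerivAt
  -- derivative of lam ^ 2
  have h1 : HasDerivAt (fun s => lam s ^ 2) (2 * lam t * L) t := by
    have := hlamD.fun_pow 2
    simpa using this
  -- derivative of (c - f'^2) / f^2
  have h2 : HasDerivAt (fun s => (c - f' s ^ 2) / f s ^ 2)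
      ((-(2 * f' t * f'' t) * f t ^ 2 - (c - f' t ^ 2) * (2 * f t * f' t)) / (f t ^ 2) ^ 2) t := by
    have hnum : HasDerivAt (fun s => c - f' s ^ 2) (-(2 * f' t * f'' t)) t := by
      have := (hasDerivAt_const t c).fun_sub (hF'.fun_pow 2)
      simpa [mul_comm, mul_assoc] using this
    have hden : HasDerivAt (fun s => f s ^ 2) (2 * f t * f' t) t := by
      have := hF.fun_pow 2
      simpa using this
    exact hnum.div hden (pow_ne_zero 2 hF0)
  have hEq1 : (fun s => lam s ^ 2) =ᶠ[nhds t] (fun s => (c - f' s ^ 2) / f s ^ 2) := by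
    filter_upwards [hmem] with s hs using hlamsq s hs
  have eqA : 2 * lam t * L =
      (-(2 * f' t * f'' t) * f t ^ 2 - (c - f' t ^ 2) * (2 * f t * f' t)) / (f t ^ 2) ^ 2 :=
    h1.unique (h2.congr_of_eventuallyEq hEq1)
  -- derivative of tan ∘ θ
  have h3 : HasDerivAt (fun s => Real.tan (θ s)) (1 / Real.cos (θ t) ^ 2 * θ' t) t :=
    (Real.hasDerivAt_tan hC0).comp t (hθ t ht)
  -- derivative of f' / (f * lam)
  have h4 : HasDerivAt (fun s => f' s / (f s * lam s))
      ((f'' t * (f t * lam t) - f' t * (f' t * lam t + f t * L)) / (f t * lam t) ^ 2) t :=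
    hF'.div (hF.mul hlamD) (mul_ne_zero hF0 hΛ0)
  have hEq2 : (fun s => Real.tan (θ s)) =ᶠ[nhds t] (fun s => f' s / (f s * lam s)) := by
    filter_upwards [hmem] with s hs using htan s hs
  have eqB : 1 / Real.cos (θ t) ^ 2 * θ' t =
      (f'' t * (f t * lam t) - f' t * (f' t * lam t + f t * L)) / (f t * lam t) ^ 2 :=
    h3.unique (h4.congr_of_eventuallyEq hEq2)
  -- trig identity: 1 / cos² = 1 + tan²
  have hsec : 1 / Real.cos (θ t) ^ 2 = 1 + Real.tan (θ t) ^ 2 := by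
    rw [one_div, ← Real.inv_one_add_tan_sq hC0, inv_inv]
  rw [hsec, htan t ht] at eqB
  have hls := hlamsq t ht
  have hmu := hmul t ht
  -- clear denominators
  have hls' : lam t ^ 2 * f t ^ 2 = c - f' t ^ 2 := by
    field_simp at hls; linarith
  have hmu' : μ t * lam t * f t = -(f'' t) := by
    field_simp at hmu; linarith
  have eqA2 : lam t * L * f t ^ 2 = -(f' t * (f'' t + f t * lam t ^ 2)) := by
    have h2F : (2 : ℝ) * f t ^ 2 ≠ 0 := by positivity
    apply mul_right_cancel₀ h2F
    field_simp at eqA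
    linear_combination 2 * f t * eqA + 2 * f t * f' t * hls'
  have hcpos : 0 < c := by nlinarith [sq_nonneg (f' t), sq_nonneg (f t * lam t), mul_pos (mul_pos (mul_self_pos.2 hF0) (mul_self_pos.2 hΛ0)) one_pos]
  have eqB2 : θ' t * (f t * lam t) = f'' t := by
    apply mul_right_cancel₀ (ne_of_gt hcpos)
    field_simp at eqB
    linear_combination (f t * lam t) * eqB - f' t * eqA2 - (θ' t * f t * lam t - f'' t) * hls'
  have hfin : (θ' t + μ t) * (f t * lam t) = 0 := by
    linear_combination eqB2 + hmu'
  have hFL : f t * lam t ≠ 0 := mul_ne_zero hF0 hΛ0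
  have := (mul_eq_zero.1 hfin).resolve_right hFL
  linarith
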